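/- arXiv:0905.1368 — 6 statements merged into one kernel-verified Lean document; each statement's English description precedes it below -/
import Mathlib

section
/- Let (X,d) be a metric space, X₁,…,Xₙ topological spaces, π : X₁ ∪ … ∪ Xₙ → X a continuous map, and f : X₁ ∪ … ∪ Xₙ → ℝ a nonnegative continuous function. Fix x ∈ Xᵢ and ρ > 0, and suppose π⁻¹(B(π(x),2ρ)) ∩ Xⱼ is complete for each j. Then there exist x' in the disjoint union and 0 < ρ' ≤ ρ such that d(π(x'),π(x)) < 2ρ, sup over π⁻¹(B(π(x'),ρ')) of f is ≤ 2 f(x'), and ρ' · f(x') ≥ ρ · f(x). -/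
open Filter


/-- Hofer's lemma for a disjoint union of topological spaces mapping to a metric space. -/
theorem stmt_0 {X : Type*} [MetricSpace X] {n : ℕ} (Y : Fin n → Type*)
    [∀ i, TopologicalSpace (Y i)]
    (π : (Σ i, Y i) → X) (hπ : Continuous π)
    (f : (Σ i, Y i) → ℝ) (hf : Continuous f) (hf0 : ∀ y, 0 ≤ f y)
    (x : Σ i, Y i) (ρ : ℝ) (hρ : 0 < ρ)
    (hcomplete : ∀ (i : Fin n) (u : ℕ → Y i),
      (∀ k, π ⟨i, u k⟩ ∈ Metric.ball (π x) (2 * ρ)) →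
      CauchySeq (fun k => π ⟨i, u k⟩) →
      ∃ (φ : ℕ → ℕ) (y : Y i), StrictMono φ ∧
        Filter.Tendsto (fun k => u (φ k)) Filter.atTop (nhds y)) :
    ∃ (x' : Σ i, Y i) (ρ' : ℝ), 0 < ρ' ∧ ρ' ≤ ρ ∧
      dist (π x') (π x) < 2 * ρ ∧
      (∀ y : Σ i, Y i, π y ∈ Metric.ball (π x') ρ' → f y ≤ 2 * f x') ∧
      ρ * f x ≤ ρ' * f x' := by
  by_contra hcon
  push_neg at hcon
  -- step existence
  have key : ∀ (z : Σ i, Y i) (r : ℝ), ∃ y : Σ i, Y i,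
      0 < r → r ≤ ρ → dist (π z) (π x) < 2 * ρ → ρ * f x ≤ r * f z →
      dist (π y) (π z) < r ∧ 2 * f z < f y := by
    intro z r
    by_cases H : 0 < r ∧ r ≤ ρ ∧ dist (π z) (π x) < 2 * ρ ∧ ρ * f x ≤ r * f z
    · obtain ⟨h1, h2, h3, h4⟩ := H
      have hex : ∃ y : Σ i, Y i, dist (π y) (π z) < r ∧ 2 * f z < f y := by
        by_contra hy
        push_neg at hy
        have := hcon z r h1 h2 h3 (fun y hyb => hy y (by simpa [Metric.mem_ball] using hyb))
        exact absurd h4 (not_le.2 this)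
      obtain ⟨y, hy1, hy2⟩ := hex
      exact ⟨y, fun _ _ _ _ => ⟨hy1, hy2⟩⟩
    · exact ⟨x, fun h1 h2 h3 h4 => absurd ⟨h1, h2, h3, h4⟩ H⟩
  choose g hg using key
  set F : ℕ → Σ i, Y i := fun k => Nat.rec x (fun k z => g z (ρ * (1/2) ^ k)) k with hF
  have F0 : F 0 = x := rfl
  have Fsucc : ∀ k, F (k + 1) = g (F k) (ρ * (1/2) ^ k) := fun k => rfl
  have hhalf : ∀ k : ℕ, (0:ℝ) < (1/2:ℝ) ^ k := fun k => pow_pos (by norm_num) k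
  have hhalf1 : ∀ k : ℕ, ((1/2:ℝ)) ^ k ≤ 1 :=
    fun k => pow_le_one₀ (by norm_num) (by norm_num)
  have hQ : ∀ k, dist (π (F k)) (π x) ≤ 2 * ρ * (1 - (1/2) ^ k) ∧
      ρ * f x ≤ ρ * (1/2) ^ k * f (F k) := by
    intro k
    induction k with
    | zero => simp [F0]
    | succ k ih =>
      obtain ⟨ih1, ih2⟩ := ih
      have hr : 0 < ρ * (1/2:ℝ) ^ k := by positivity
      have hrρ : ρ * (1/2:ℝ) ^ k ≤ ρ := by
        nlinarith [hhalf1 k]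
      have hdist : dist (π (F k)) (π x) < 2 * ρ := by
        nlinarith [hhalf k]
      have hstep := hg (F k) (ρ * (1/2) ^ k) hr hrρ hdist ih2
      rw [← Fsucc k] at hstep
      constructor
      · have ht := dist_triangle (π (F (k+1))) (π (F k)) (π x)
        have : (1/2:ℝ) ^ (k+1) = (1/2) ^ k * (1/2) := pow_succ _ _
        nlinarith [hstep.1]
      · have h5 : (0:ℝ) < ρ * (1/2) ^ (k+1) := by positivity
        have h6 := mul_le_mul_of_nonneg_left hstep.2.le h5.le
        have h7 : ρ * (1/2:ℝ) ^ (k+1) * (2 * f (F k)) = ρ * (1/2) ^ k * f (F k) := by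
          rw [pow_succ]; ring
        linarith
  have hstepAll : ∀ k, dist (π (F (k+1))) (π (F k)) < ρ * (1/2) ^ k ∧
      2 * f (F k) < f (F (k+1)) := by
    intro k
    obtain ⟨ih1, ih2⟩ := hQ k
    have hr : 0 < ρ * (1/2:ℝ) ^ k := by positivity
    have hrρ : ρ * (1/2:ℝ) ^ k ≤ ρ := by nlinarith [hhalf1 k]
    have hdist : dist (π (F k)) (π x) < 2 * ρ := by nlinarith [hhalf k]
    have hstep := hg (F k) (ρ * (1/2) ^ k) hr hrρ hdist ih2
    rw [← Fsucc k] at hstep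
    exact hstep
  have hc1 : 0 < f (F 1) := by
    have h1 : 2 * f (F 0) < f (F 1) := (hstepAll 0).2
    have h2 := hf0 (F 0)
    linarith
  have hgrow : ∀ k, (2:ℝ) ^ k * f (F 1) ≤ f (F (k + 1)) := by
    intro k
    induction k with
    | zero => simp
    | succ k ih =>
      have h1 := (hstepAll (k+1)).2
      rw [pow_succ]
      linarith
  have htop : Tendsto (fun k => f (F k)) atTop atTop := by
    rw [← tendsto_add_atTop_iff_nat 1]
    exact tendsto_atTop_mono hgrow
      ((tendsto_pow_atTop_atTop_of_one_lt (by norm_num : (1:ℝ) < 2)).atTop_mul_const hc1)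
  have hcauchy : CauchySeq (fun k => π (F k)) := by
    apply cauchySeq_of_le_geometric (1/2) ρ (by norm_num)
    intro k
    rw [dist_comm]
    exact (hstepAll k).1.le
  have hball : ∀ k, dist (π (F k)) (π x) < 2 * ρ := by
    intro k
    have := (hQ k).1
    nlinarith [hhalf k]
  -- pigeonhole
  have hfin : ∃ i : Fin n, ∃ᶠ k in atTop, (F k).1 = i := by
    by_contra hno
    push_neg at hno
    have hev : ∀ᶠ k in atTop, ∀ i : Fin n, (F k).1 ≠ i :=
      Filter.eventually_all.2 fun i => hno i
    obtain ⟨k, hk⟩ := hev.exists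
    exact hk (F k).1 rfl
  obtain ⟨i, hi⟩ := hfin
  obtain ⟨φ, hφmono, hφ⟩ := Filter.extraction_of_frequently_atTop hi
  have heta : ∀ (s : Σ j, Y j) (h : s.1 = i), (⟨i, h ▸ s.2⟩ : Σ j, Y j) = s := by
    rintro ⟨j, z⟩ rfl; rfl
  set u : ℕ → Y i := fun k => (hφ k) ▸ (F (φ k)).2 with hu
  have hueq : ∀ k, (⟨i, u k⟩ : Σ j, Y j) = F (φ k) := fun k => heta _ (hφ k)
  have hball' : ∀ k, π ⟨i, u k⟩ ∈ Metric.ball (π x) (2 * ρ) := by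
    intro k
    rw [hueq k, Metric.mem_ball]
    exact hball (φ k)
  have hcau' : CauchySeq (fun k => π ⟨i, u k⟩) := by
    have : CauchySeq ((fun k => π (F k)) ∘ φ) :=
      hcauchy.comp_tendsto (hφmono.tendsto_atTop)
    simpa only [Function.comp_def, hueq] using this
  obtain ⟨ψ, y, hψmono, hy⟩ := hcomplete i u hball' hcau'
  have hconv : Tendsto (fun k => f (F (φ (ψ k)))) atTop (nhds (f ⟨i, y⟩)) := by
    have hc : Continuous (fun z : Y i => f ⟨i, z⟩) := hf.comp continuous_sigmaMk
    have := (hc.tendsto y).comp hy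
    simpa only [Function.comp_def, hueq] using this
  have hdiv : Tendsto (fun k => f (F (φ (ψ k)))) atTop atTop :=
    htop.comp ((hφmono.comp hψmono).tendsto_atTop)
  exact absurd hconv (not_tendsto_nhds_of_tendsto_atTop hdiv _)
end

section
/- Let f : [1,∞) → [0,∞) be a C² function satisfying f''(s) ≥ Δ² f(s) for all s ≥ 1, for some Δ > 0, and assume ∫₁^∞ f(s) ds < ∞. Then there exists a constant C depending only on Δ such that f(s) ≤ C e^{−Δ s} ∫₁² f(t) dt for all s ≥ 2. -/
open MeasureTheory

lemma mono_aux {F F' : ℝ → ℝ} {a : ℝ} (h : ∀ x ∈ Set.Ici a, HasDerivAt F (F' x) x)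
    (h0 : ∀ x ∈ Set.Ici a, 0 ≤ F' x) : MonotoneOn F (Set.Ici a) := by
  apply monotoneOn_of_deriv_nonneg (convex_Ici a)
    (fun x hx => (h x hx).continuousAt.continuousWithinAt)
  · intro x hx
    rw [interior_Ici] at hx
    exact (h x (Set.mem_Ici.2 hx.le)).differentiableAt.differentiableWithinAt
  · intro x hx
    rw [interior_Ici] at hx
    rw [(h x (Set.mem_Ici.2 hx.le)).deriv]
    exact h0 x (Set.mem_Ici.2 hx.le)

lemma anti_aux {F F' : ℝ → ℝ} {a : ℝ} (h : ∀ x ∈ Set.Ici a, HasDerivAt F (F' x) x)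
    (h0 : ∀ x ∈ Set.Ici a, F' x ≤ 0) : AntitoneOn F (Set.Ici a) := by
  apply antitoneOn_of_deriv_nonpos (convex_Ici a)
    (fun x hx => (h x hx).continuousAt.continuousWithinAt)
  · intro x hx
    rw [interior_Ici] at hx
    exact (h x (Set.mem_Ici.2 hx.le)).differentiableAt.differentiableWithinAt
  · intro x hx
    rw [interior_Ici] at hx
    rw [(h x (Set.mem_Ici.2 hx.le)).deriv]
    exact h0 x (Set.mem_Ici.2 hx.le)

/-- Exponential decay for a nonnegative integrable function on `[1,∞)` satisfying the
convexity differential inequality `f'' ≥ Δ² f`. The constant `C` depends only on `Δ`. -/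
theorem stmt_1 (Δ : ℝ) (hΔ : 0 < Δ) :
    ∃ C : ℝ, 0 < C ∧ ∀ f f' f'' : ℝ → ℝ,
      (∀ s, 1 ≤ s → HasDerivAt f (f' s) s) →
      (∀ s, 1 ≤ s → HasDerivAt f' (f'' s) s) →
      ContinuousOn f'' (Set.Ici 1) →
      (∀ s, 1 ≤ s → 0 ≤ f s) →
      (∀ s, 1 ≤ s → Δ ^ 2 * f s ≤ f'' s) →
      IntegrableOn f (Set.Ici 1) →
      ∀ s, 2 ≤ s → f s ≤ C * Real.exp (-Δ * s) * ∫ t in (1:ℝ)..2, f t := by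
  refine ⟨Real.exp (2*Δ), Real.exp_pos _, ?_⟩
  intro f f' f'' hf hf' hf''c hf0 hineq hint s hs
  have hs1 : (1:ℝ) ≤ s := le_trans one_le_two hs
  -- f'' is nonnegative on [1,∞)
  have hf''0 : ∀ x, 1 ≤ x → 0 ≤ f'' x := fun x hx =>
    le_trans (by have := hf0 x hx; positivity) (hineq x hx)
  -- f' is monotone on [1,∞)
  have hmono' : MonotoneOn f' (Set.Ici 1) :=
    mono_aux (fun x hx => hf' x hx) (fun x hx => hf''0 x hx)
  -- f' ≤ 0 on [1,∞)
  have hf'le : ∀ x, 1 ≤ x → f' x ≤ 0 := by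
    by_contra hcon
    push_neg at hcon
    obtain ⟨s₀, hs₀, hc⟩ := hcon
    set c := f' s₀ with hcdef
    -- x ↦ f x - c * x is monotone on [s₀, ∞)
    have hm : MonotoneOn (fun x => f x - c * x) (Set.Ici s₀) := by
      apply mono_aux (F' := fun x => f' x - c)
      · intro x hx
        exact ((hf x (le_trans hs₀ hx)).sub ((hasDerivAt_id x).const_mul c)).congr_deriv
          (by ring)
      · intro x hx
        have := hmono' (Set.mem_Ici.2 hs₀) (Set.mem_Ici.2 (le_trans hs₀ hx)) hx
        linarith [this]
    -- hence f x ≥ c for x ≥ s₀ + 1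
    have hge : ∀ x, s₀ + 1 ≤ x → c ≤ f x := by
      intro x hx
      have h1 : f s₀ - c * s₀ ≤ f x - c * x :=
        hm (Set.mem_Ici.2 le_rfl) (Set.mem_Ici.2 (by linarith)) (by linarith)
      have h2 : 0 ≤ f s₀ := hf0 s₀ hs₀
      nlinarith
    -- constant c is integrable on [s₀+1, ∞): contradiction
    have hci : IntegrableOn (fun _ => c) (Set.Ici (s₀+1)) := by
      apply Integrable.mono (hint.mono_set (Set.Ici_subset_Ici.2 (by linarith)))
        aestronglyMeasurable_const
      filter_upwards [ae_restrict_mem measurableSet_Ici] with x hx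
      rw [Real.norm_eq_abs, Real.norm_eq_abs, abs_of_pos hc,
        abs_of_nonneg (hf0 x (by have := Set.mem_Ici.1 hx; linarith))]
      exact hge x (Set.mem_Ici.1 hx)
    rw [integrableOn_const_iff] at hci
    rcases hci with h | h
    · simp at h; exact absurd h (ne_of_gt hc)
    · rw [Real.volume_Ici] at h; exact absurd h (by simp)
  -- f is antitone on [1,∞), so f x ≤ f 1
  have hanti : AntitoneOn f (Set.Ici 1) :=
    anti_aux (fun x hx => hf x hx) (fun x hx => hf'le x hx)
  have hfb : ∀ x, 1 ≤ x → f x ≤ f 1 :=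
    fun x hx => hanti (Set.mem_Ici.2 le_rfl) (Set.mem_Ici.2 hx) hx
  -- g := f' + Δ f is ≤ 0 on [1,∞)
  have hgle : ∀ x, 1 ≤ x → f' x + Δ * f x ≤ 0 := by
    by_contra hcon
    push_neg at hcon
    obtain ⟨s₀, hs₀, hc⟩ := hcon
    -- h x = exp(-Δ x) * (f' x + Δ f x) is monotone on [s₀, ∞)
    have hm : MonotoneOn (fun x => Real.exp (-Δ * x) * (f' x + Δ * f x)) (Set.Ici s₀) := by
      apply mono_aux (F' := fun x => Real.exp (-Δ * x) * (f'' x - Δ^2 * f x))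
      · intro x hx
        have hx1 : (1:ℝ) ≤ x := le_trans hs₀ hx
        have he : HasDerivAt (fun x => Real.exp (-Δ * x)) (-Δ * Real.exp (-Δ * x)) x := by
          simpa [mul_comm] using ((hasDerivAt_id x).const_mul (-Δ)).exp
        have hg : HasDerivAt (fun x => f' x + Δ * f x) (f'' x + Δ * f' x) x :=
          (hf' x hx1).add ((hf x hx1).const_mul Δ)
        have := he.mul hg
        convert this using 1
        all_goals first | rfl | ring
      · intro x hx
        have hx1 : (1:ℝ) ≤ x := le_trans hs₀ hx
        have := hineq x hx1
        have := Real.exp_pos (-Δ * x)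
        nlinarith
    set ε := Real.exp (-Δ * s₀) * (f' s₀ + Δ * f s₀) with hεdef
    have hε : 0 < ε := mul_pos (Real.exp_pos _) hc
    have key : ∀ x, s₀ ≤ x → ε ≤ Real.exp (-Δ * x) * (Δ * f 1) := by
      intro x hx
      have h1 : ε ≤ Real.exp (-Δ * x) * (f' x + Δ * f x) :=
        hm (Set.mem_Ici.2 le_rfl) (Set.mem_Ici.2 hx) hx
      have hx1 : (1:ℝ) ≤ x := le_trans hs₀ hx
      have h2 : f' x + Δ * f x ≤ Δ * f 1 := by
        have := hf'le x hx1
        have := hfb x hx1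
        nlinarith
      have := Real.exp_pos (-Δ * x)
      nlinarith
    -- choose x large to contradict
    set M := Δ * f 1 with hMdef
    rcases le_or_gt M 0 with hM | hM
    · have := key s₀ le_rfl
      nlinarith [Real.exp_pos (-Δ * s₀), mul_nonpos_of_nonneg_of_nonpos (Real.exp_pos (-Δ * s₀)).le hM]
    · set x := max s₀ (M / (ε * Δ)) with hxdef
      have hx : s₀ ≤ x := le_max_left _ _
      have hxM : M / ε < Real.exp (Δ * x) := by
        have h1 : M / (ε * Δ) ≤ x := le_max_right _ _
        have h2 : Δ * x + 1 ≤ Real.exp (Δ * x) := Real.add_one_le_exp _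
        have h3 : M / ε ≤ Δ * x := by
          rw [div_le_iff₀ hε]
          rw [div_le_iff₀ (mul_pos hε hΔ)] at h1
          nlinarith
        linarith
      have := key x hx
      rw [neg_mul, Real.exp_neg] at this
      have hex := Real.exp_pos (Δ * x)
      rw [div_lt_iff₀ hε] at hxM
      have : ε * Real.exp (Δ * x) ≤ M := by
        rw [inv_mul_eq_div, le_div_iff₀ hex] at this
        linarith
      nlinarith
  -- exp(Δ x) * f x is antitone on [1,∞)
  have hpsi : AntitoneOn (fun x => Real.exp (Δ * x) * f x) (Set.Ici 1) := by
    apply anti_aux (F' := fun x => Real.exp (Δ * x) * (f' x + Δ * f x))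
    · intro x hx
      have he : HasDerivAt (fun x => Real.exp (Δ * x)) (Δ * Real.exp (Δ * x)) x := by
        simpa [mul_comm] using ((hasDerivAt_id x).const_mul Δ).exp
      have := he.mul (hf x hx)
      convert this using 1
      all_goals first | rfl | ring
    · intro x hx
      have := hgle x hx
      have := Real.exp_pos (Δ * x)
      nlinarith
  -- pointwise bound for t ∈ [1,2]
  have hpt : ∀ t ∈ Set.Icc (1:ℝ) 2, f s ≤ Real.exp (2*Δ) * Real.exp (-Δ * s) * f t := by
    intro t ht
    have h1 : Real.exp (Δ * s) * f s ≤ Real.exp (Δ * t) * f t :=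
      hpsi (Set.mem_Ici.2 ht.1) (Set.mem_Ici.2 hs1) (le_trans ht.2 hs)
    have h2 : Real.exp (Δ * t) ≤ Real.exp (2 * Δ) :=
      Real.exp_le_exp.2 (by nlinarith [ht.2])
    have h3 : 0 ≤ f t := hf0 t ht.1
    have hes := Real.exp_pos (Δ * s)
    have key : f s ≤ Real.exp (2*Δ) / Real.exp (Δ * s) * f t := by
      rw [div_mul_eq_mul_div, le_div_iff₀ hes]
      calc f s * Real.exp (Δ * s) = Real.exp (Δ * s) * f s := by ring
        _ ≤ Real.exp (Δ * t) * f t := h1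
        _ ≤ Real.exp (2 * Δ) * f t := by nlinarith
    calc f s ≤ Real.exp (2*Δ) / Real.exp (Δ * s) * f t := key
      _ = Real.exp (2*Δ) * Real.exp (-Δ * s) * f t := by
          rw [neg_mul, Real.exp_neg, div_eq_mul_inv]
  -- integrate over [1,2]
  have hfint : IntervalIntegrable f volume 1 2 := by
    rw [intervalIntegrable_iff_integrableOn_Icc_of_le one_le_two]
    exact hint.mono_set (Set.Icc_subset_Ici_self)
  have hint2 : IntervalIntegrable (fun t => Real.exp (2*Δ) * Real.exp (-Δ * s) * f t)
      volume 1 2 := (hfint.const_mul _)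
  have hI : ∫ t in (1:ℝ)..2, f s ≤ ∫ t in (1:ℝ)..2, Real.exp (2*Δ) * Real.exp (-Δ * s) * f t := by
    apply intervalIntegral.integral_mono_on one_le_two intervalIntegrable_const hint2
    intro t ht
    exact hpt t ht
  simp only [intervalIntegral.integral_const, smul_eq_mul,
    intervalIntegral.integral_const_mul] at hI
  rw [neg_mul] at hI ⊢
  linarith
end

section
/- Let V₀, V₁, V₂ be symplectic vector spaces with symplectic forms ω₀, ω₁, ω₂, and let Λ₀₁ ⊂ V₀⁻ × V₁ and Λ₁₂ ⊂ V₁⁻ × V₂ be Lagrangian subspaces such that Λ₀₁ × Λ₁₂ is transverse to V₀ × Δ_{V₁} × V₂ in V₀⁻ × V₁ × V₁⁻ × V₂. Then the set Λ₀₂ = {(v₀,v₂) : ∃ v₁, (v₀,v₁) ∈ Λ₀₁ and (v₁,v₂) ∈ Λ₁₂} is a Lagrangian subspace of V₀⁻ × V₂. -/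
def IsSymplecticForm {V : Type*} [AddCommGroup V] [Module ℝ V] (ω : V → V → ℝ) : Prop :=
  (∀ (a : ℝ) (x y z : V), ω (a • x + y) z = a * ω x z + ω y z) ∧
  (∀ x y : V, ω x y = - ω y x) ∧
  (∀ x : V, (∀ y : V, ω x y = 0) → x = 0)

/-- A Lagrangian subspace: a set equal to its own `ω`-orthogonal complement. -/
def IsLagrangianSubspace {V : Type*} [AddCommGroup V] [Module ℝ V]
    (ω : V → V → ℝ) (L : Set V) : Prop :=
  L = {x | ∀ y ∈ L, ω x y = 0}

namespace SympAux

variable {V : Type*} [AddCommGroup V] [Module ℝ V] {ω : V → V → ℝ}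

lemma zero_left (h : IsSymplecticForm ω) (z : V) : ω 0 z = 0 := by
  have := h.1 (-1) z z z
  have h0 : ((-1 : ℝ) • z + z) = 0 := by simp
  rw [h0] at this; linarith

lemma add_left (h : IsSymplecticForm ω) (x y z : V) : ω (x + y) z = ω x z + ω y z := by
  have := h.1 1 x y z; simpa using this

lemma smul_left (h : IsSymplecticForm ω) (a : ℝ) (x z : V) : ω (a • x) z = a * ω x z := by
  have := h.1 a x 0 z
  rw [add_zero, zero_left h] at this; linarith

lemma zero_right (h : IsSymplecticForm ω) (z : V) : ω z 0 = 0 := by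
  rw [h.2.1, zero_left h, neg_zero]

lemma add_right (h : IsSymplecticForm ω) (x y z : V) : ω z (x + y) = ω z x + ω z y := by
  rw [h.2.1, add_left h, h.2.1 x z, h.2.1 y z]; ring

lemma smul_right (h : IsSymplecticForm ω) (a : ℝ) (x z : V) : ω z (a • x) = a * ω z x := by
  rw [h.2.1, smul_left h, h.2.1 x z]; ring

lemma neg_symp (h : IsSymplecticForm ω) : IsSymplecticForm (fun x y => -(ω x y)) := by
  refine ⟨fun a x y z => by show -(ω _ _) = a * -(ω _ _) + -(ω _ _); rw [h.1]; ring,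
    fun x y => by show -(ω x y) = -(-(ω y x)); rw [h.2.1 x y], ?_⟩
  intro x hx
  exact h.2.2 x fun y => by have := hx y; simpa using this

lemma prod_symp {W : Type*} [AddCommGroup W] [Module ℝ W] {σ : W → W → ℝ}
    (h : IsSymplecticForm ω) (h' : IsSymplecticForm σ) :
    IsSymplecticForm (fun p q : V × W => ω p.1 q.1 + σ p.2 q.2) := by
  refine ⟨fun a x y z => ?_, fun x y => ?_, ?_⟩
  · show ω (a • x.1 + y.1) z.1 + σ (a • x.2 + y.2) z.2 = _
    rw [h.1, h'.1]; show _ = a * (ω x.1 z.1 + σ x.2 z.2) + (ω y.1 z.1 + σ y.2 z.2); ring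
  · show ω x.1 y.1 + σ x.2 y.2 = -(ω y.1 x.1 + σ y.2 x.2)
    rw [h.2.1 x.1, h'.2.1 x.2]; ring
  intro x hx
  have h1 : x.1 = 0 := h.2.2 x.1 fun y => by
    have := hx (y, 0); simp only [zero_right h'] at this; linarith
  have h2 : x.2 = 0 := h'.2.2 x.2 fun y => by
    have := hx (0, y); simp only [zero_right h] at this; linarith
  exact Prod.ext h1 h2

/-- Package a symplectic form as a Mathlib bilinear form. -/
def toB (h : IsSymplecticForm ω) : LinearMap.BilinForm ℝ V :=
  LinearMap.mk₂ ℝ ω (add_left h) (smul_left h) (fun x y z => add_right h y z x)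
    (fun a x z => smul_right h a z x)

@[simp] lemma toB_apply (h : IsSymplecticForm ω) (x y : V) : toB h x y = ω x y := rfl

lemma toB_nondeg (h : IsSymplecticForm ω) : (toB h).Nondegenerate :=
  ⟨h.2.2, fun y hy => h.2.2 y fun x => by have := hy x; rw [h.2.1]; simp_all⟩

lemma toB_refl (h : IsSymplecticForm ω) : (toB h).IsRefl := by
  intro x y hxy
  show ω y x = 0
  rw [h.2.1]; simpa using hxy

/-- The annihilator of a set is a submodule. -/
def annSub (B : LinearMap.BilinForm ℝ V) (S : Set V) : Submodule ℝ V where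
  carrier := {x | ∀ y ∈ S, B x y = 0}
  zero_mem' := fun y _ => by simp
  add_mem' := fun {x x'} hx hx' y hy => by
    rw [map_add, LinearMap.add_apply, hx y hy, hx' y hy, add_zero]
  smul_mem' := fun c x hx y hy => by
    rw [map_smul, LinearMap.smul_apply, hx y hy, smul_zero]

@[simp] lemma mem_annSub {B : LinearMap.BilinForm ℝ V} {S : Set V} {x : V} :
    x ∈ annSub B S ↔ ∀ y ∈ S, B x y = 0 := Iff.rfl

lemma orth_sup (B : LinearMap.BilinForm ℝ V) (A A' : Submodule ℝ V) :
    B.orthogonal (A ⊔ A') = B.orthogonal A ⊓ B.orthogonal A' := by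
  ext x
  simp only [Submodule.mem_inf, LinearMap.BilinForm.mem_orthogonal_iff]
  constructor
  · exact fun h => ⟨fun n hn => h n (Submodule.mem_sup_left hn),
      fun n hn => h n (Submodule.mem_sup_right hn)⟩
  · rintro ⟨h1, h2⟩ n hn
    rcases Submodule.mem_sup.mp hn with ⟨a, ha, b, hb, rfl⟩
    show B (a + b) x = 0
    rw [map_add, LinearMap.add_apply, h1 a ha, h2 b hb, add_zero]

lemma orth_inf [FiniteDimensional ℝ V] {B : LinearMap.BilinForm ℝ V}
    (hn : B.Nondegenerate) (hr : B.IsRefl) (A A' : Submodule ℝ V) :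
    B.orthogonal (A ⊓ A') = B.orthogonal A ⊔ B.orthogonal A' := by
  conv_lhs => rw [← B.orthogonal_orthogonal hn hr A, ← B.orthogonal_orthogonal hn hr A']
  rw [← orth_sup, B.orthogonal_orthogonal hn hr]

end SympAux

open SympAux

/-- Linear composition of Lagrangian correspondences: if `Λ₀₁ × Λ₁₂` is transverse to
`V₀ × Δ_{V₁} × V₂`, then `Λ₀₁ ∘ Λ₁₂` is a Lagrangian subspace of `V₀⁻ × V₂`. -/
theorem stmt_3 {V0 V1 V2 : Type*}
    [AddCommGroup V0] [Module ℝ V0] [FiniteDimensional ℝ V0]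
    [AddCommGroup V1] [Module ℝ V1] [FiniteDimensional ℝ V1]
    [AddCommGroup V2] [Module ℝ V2] [FiniteDimensional ℝ V2]
    (ω0 : V0 → V0 → ℝ) (ω1 : V1 → V1 → ℝ) (ω2 : V2 → V2 → ℝ)
    (hω0 : IsSymplecticForm ω0) (hω1 : IsSymplecticForm ω1) (hω2 : IsSymplecticForm ω2)
    (Λ01 : Set (V0 × V1)) (Λ12 : Set (V1 × V2))
    (h01 : IsLagrangianSubspace
      (fun p q : V0 × V1 => -(ω0 p.1 q.1) + ω1 p.2 q.2) Λ01)
    (h12 : IsLagrangianSubspace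
      (fun p q : V1 × V2 => -(ω1 p.1 q.1) + ω2 p.2 q.2) Λ12)
    -- transversality: `Λ₀₁ × Λ₁₂ + (V₀ × Δ_{V₁} × V₂)` is everything
    (htrans : ∀ x : (V0 × V1) × (V1 × V2), ∃ a ∈ Λ01, ∃ b ∈ Λ12,
      ∃ (d0 : V0) (d1 : V1) (d2 : V2),
        x = ((a.1 + d0, a.2 + d1), (b.1 + d1, b.2 + d2))) :
    IsLagrangianSubspace (fun p q : V0 × V2 => -(ω0 p.1 q.1) + ω2 p.2 q.2)
      {p : V0 × V2 | ∃ v1 : V1, (p.1, v1) ∈ Λ01 ∧ (v1, p.2) ∈ Λ12} := by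
  classical
  -- symplectic structures on the correspondence spaces
  have hσ01 : IsSymplecticForm (fun p q : V0 × V1 => -(ω0 p.1 q.1) + ω1 p.2 q.2) :=
    prod_symp (neg_symp hω0) hω1
  have hσ12 : IsSymplecticForm (fun p q : V1 × V2 => -(ω1 p.1 q.1) + ω2 p.2 q.2) :=
    prod_symp (neg_symp hω1) hω2
  set B01 := toB hσ01 with hB01
  set B12 := toB hσ12 with hB12
  have hΩsymp : IsSymplecticForm
      (fun x y : (V0 × V1) × (V1 × V2) => B01 x.1 y.1 + B12 x.2 y.2) :=
    prod_symp hσ01 hσ12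
  set Ω := toB hΩsymp with hΩ
  -- the Lagrangian subspaces as submodules
  set L01 : Submodule ℝ (V0 × V1) := annSub B01 Λ01 with hL01
  set L12 : Submodule ℝ (V1 × V2) := annSub B12 Λ12 with hL12
  have hmem01 : ∀ x : V0 × V1, x ∈ L01 ↔ x ∈ Λ01 := by
    intro x
    constructor
    · intro hx; rw [h01]; exact hx
    · intro hx y hy
      have := h01 ▸ hx
      exact this y hy
  have hmem12 : ∀ x : V1 × V2, x ∈ L12 ↔ x ∈ Λ12 := by
    intro x
    constructor
    · intro hx; rw [h12]; exact hx
    · intro hx y hy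
      have := h12 ▸ hx
      exact this y hy
  set Λs : Submodule ℝ ((V0 × V1) × (V1 × V2)) := L01.prod L12 with hΛs
  -- the coisotropic `V₀ × Δ × V₂`
  set f : (V0 × V1 × V2) →ₗ[ℝ] ((V0 × V1) × (V1 × V2)) :=
    { toFun := fun d => ((d.1, d.2.1), (d.2.1, d.2.2))
      map_add' := fun x y => rfl
      map_smul' := fun c x => rfl } with hf
  set C : Submodule ℝ ((V0 × V1) × (V1 × V2)) := LinearMap.range f with hC
  set g : V1 →ₗ[ℝ] ((V0 × V1) × (V1 × V2)) :=
    { toFun := fun e => ((0, e), (e, 0))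
      map_add' := fun x y => by ext <;> simp
      map_smul' := fun c x => by ext <;> simp } with hg
  set K : Submodule ℝ ((V0 × V1) × (V1 × V2)) := LinearMap.range g with hK
  -- Λs is Lagrangian for Ω
  have hΛlag : Ω.orthogonal Λs = Λs := by
    apply le_antisymm
    · intro x hx
      rw [LinearMap.BilinForm.mem_orthogonal_iff] at hx
      have p1 : x.1 ∈ Λ01 := by
        rw [h01]
        intro y hy
        have h0 : ((y, (0 : V1 × V2)) : (V0 × V1) × (V1 × V2)) ∈ Λs :=
          ⟨(hmem01 y).mpr hy, L12.zero_mem⟩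
        have hval : (-(ω0 y.1 x.1.1) + ω1 y.2 x.1.2) + (-(ω1 0 x.2.1) + ω2 0 x.2.2) = 0 :=
          hx _ h0
        rw [zero_left hω1, zero_left hω2] at hval
        show -(ω0 x.1.1 y.1) + ω1 x.1.2 y.2 = 0
        rw [hω0.2.1 x.1.1, hω1.2.1 x.1.2]
        linarith
      have p2 : x.2 ∈ Λ12 := by
        rw [h12]
        intro y hy
        have h0 : (((0 : V0 × V1), y) : (V0 × V1) × (V1 × V2)) ∈ Λs :=
          ⟨L01.zero_mem, (hmem12 y).mpr hy⟩
        have hval : (-(ω0 0 x.1.1) + ω1 0 x.1.2) + (-(ω1 y.1 x.2.1) + ω2 y.2 x.2.2) = 0 :=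
          hx _ h0
        rw [zero_left hω0, zero_left hω1] at hval
        show -(ω1 x.2.1 y.1) + ω2 x.2.2 y.2 = 0
        rw [hω1.2.1 x.2.1, hω2.2.1 x.2.2]
        linarith
      exact ⟨(hmem01 _).mpr p1, (hmem12 _).mpr p2⟩
    · intro x hx
      rw [LinearMap.BilinForm.mem_orthogonal_iff]
      rintro n ⟨hn1, hn2⟩
      have e1 : B01 n.1 x.1 = 0 := by
        have := (hmem01 n.1).mp hn1
        have h01' := h01 ▸ this
        exact h01' x.1 ((hmem01 x.1).mp hx.1)
      have e2 : B12 n.2 x.2 = 0 := by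
        have := (hmem12 n.2).mp hn2
        have h12' := h12 ▸ this
        exact h12' x.2 ((hmem12 x.2).mp hx.2)
      show B01 n.1 x.1 + B12 n.2 x.2 = 0
      rw [e1, e2, add_zero]
  -- the Ω-orthogonal of C is contained in K
  have hCK : Ω.orthogonal C ≤ K := by
    intro x hx
    rw [LinearMap.BilinForm.mem_orthogonal_iff] at hx
    obtain ⟨⟨x0, x1⟩, ⟨y1, y2⟩⟩ := x
    have hx0 : x0 = 0 := by
      apply hω0.2.2
      intro w
      have := hx (f (w, 0, 0)) ⟨(w, 0, 0), rfl⟩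
      have hval : (-(ω0 w x0) + ω1 0 x1) + (-(ω1 0 y1) + ω2 0 y2) = 0 := this
      rw [zero_left hω1, zero_left hω1, zero_left hω2] at hval
      rw [hω0.2.1]; linarith
    have hy2 : y2 = 0 := by
      apply hω2.2.2
      intro w
      have := hx (f (0, 0, w)) ⟨(0, 0, w), rfl⟩
      have hval : (-(ω0 0 x0) + ω1 0 x1) + (-(ω1 0 y1) + ω2 w y2) = 0 := this
      rw [zero_left hω0, zero_left hω1, zero_left hω1] at hval
      rw [hω2.2.1]; linarith
    have hmid : x1 = y1 := by
      have : x1 - y1 = 0 := by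
        apply hω1.2.2
        intro w
        have := hx (f (0, w, 0)) ⟨(0, w, 0), rfl⟩
        have hval : (-(ω0 0 x0) + ω1 w x1) + (-(ω1 w y1) + ω2 0 y2) = 0 := this
        rw [zero_left hω0, zero_left hω2] at hval
        have hsub : ω1 (x1 - y1) w = ω1 x1 w - ω1 y1 w := by
          have := add_left hω1 (x1 - y1) y1 w
          rw [sub_add_cancel] at this; linarith
        rw [hsub, hω1.2.1 x1 w, hω1.2.1 y1 w]; linarith
      have := sub_eq_zero.mp this; exact this
    subst hx0 hy2 hmid
    exact ⟨x1, rfl⟩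
  -- main reduction identity
  have hkey : Ω.orthogonal (Λs ⊓ C) ≤ Λs ⊔ K := by
    rw [orth_inf (toB_nondeg hΩsymp) (toB_refl hΩsymp), hΛlag]
    exact sup_le_sup_left hCK _
  -- now prove the set equality
  unfold IsLagrangianSubspace
  apply Set.Subset.antisymm
  · -- isotropic
    rintro ⟨v0, v2⟩ ⟨v1, hv01, hv12⟩
    rintro ⟨w0, w2⟩ ⟨w1, hw01, hw12⟩
    have e1 : -(ω0 v0 w0) + ω1 v1 w1 = 0 := (h01 ▸ hv01) (w0, w1) hw01
    have e2 : -(ω1 v1 w1) + ω2 v2 w2 = 0 := (h12 ▸ hv12) (w1, w2) hw12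
    show -(ω0 v0 w0) + ω2 v2 w2 = 0
    linarith
  · -- coisotropic
    rintro ⟨v0, v2⟩ hp
    simp only [Set.mem_setOf_eq] at hp
    set c : (V0 × V1) × (V1 × V2) := ((v0, 0), (0, v2)) with hc
    have hcmem : c ∈ Ω.orthogonal (Λs ⊓ C) := by
      rw [LinearMap.BilinForm.mem_orthogonal_iff]
      rintro n ⟨hn1, hn2⟩
      obtain ⟨d, rfl⟩ := hn2
      have hd01 : (d.1, d.2.1) ∈ Λ01 := (hmem01 _).mp hn1.1
      have hd12 : (d.2.1, d.2.2) ∈ Λ12 := (hmem12 _).mp hn1.2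
      have hΛ02 : -(ω0 v0 d.1) + ω2 v2 d.2.2 = 0 := hp (d.1, d.2.2) ⟨d.2.1, hd01, hd12⟩
      have hval : Ω (f d) c = (-(ω0 d.1 v0) + ω1 d.2.1 0) + (-(ω1 d.2.1 0) + ω2 d.2.2 v2) := rfl
      show Ω (f d) c = 0
      rw [hval, zero_right hω1, hω0.2.1 d.1, hω2.2.1 d.2.2]
      linarith
    have hsup := hkey hcmem
    rcases Submodule.mem_sup.mp hsup with ⟨y, hy, z, hz, hyz⟩
    obtain ⟨e, rfl⟩ := hz
    have hy1 : y = ((v0, -e), (-e, v2)) := by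
      have : y = c - g e := by rw [← hyz]; abel
      rw [this]
      show (((v0, 0), (0, v2)) : (V0 × V1) × (V1 × V2)) - ((0, e), (e, 0)) = _
      ext <;> simp
    rw [hy1] at hy
    exact ⟨-e, (hmem01 _).mp hy.1, (hmem12 _).mp hy.2⟩
end

section
/- Let V₀, V₁, V₂ be symplectic vector spaces and Λ₀₁ ⊂ V₀⁻ × V₁, Λ₁₂ ⊂ V₁⁻ × V₂ Lagrangian subspaces whose product is transverse to V₀ × Δ_{V₁} × V₂, with composed Lagrangian Λ₀₂ ⊂ V₀⁻ × V₂. Equip the product spaces with inner products compatible with the symplectic structures. Then there is a constant C > 0 such that every vector ξ̂ = (ξ₀₂', ξ₁', ξ₁) ∈ V₀ × V₂ × V₁ × V₁ satisfies |ξ̂| ≤ C (|π₀₂ ξ₀₂'| + |ξ₁' − ξ₁| + |π⊥ ξ̂|), where π₀₂ is the orthogonal projection of V₀ × V₂ onto Λ₀₂ and π⊥ is the orthogonal projection of V₀ × V₂ × V₁ × V₁ onto the orthogonal complement of (Λ₀₁ × Λ₁₂)ᵀ. -/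
/-- Quantitative transversality, first estimate: every `ξ̂ = (ξ₀₂', ξ₁', ξ₁)` in
`V₀ × V₂ × V₁ × V₁` satisfies `|ξ̂| ≤ C (|π₀₂ ξ₀₂'| + |ξ₁' − ξ₁| + |π⊥ ξ̂|)`, where
`π₀₂` is the orthogonal projection onto the composed Lagrangian `Λ₀₂` and `π⊥` the
orthogonal projection onto the orthogonal complement of `(Λ₀₁ × Λ₁₂)ᵀ`. -/
theorem stmt_4 {V0 V1 V2 : Type*}
    [NormedAddCommGroup V0] [InnerProductSpace ℝ V0] [FiniteDimensional ℝ V0]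
    [NormedAddCommGroup V1] [InnerProductSpace ℝ V1] [FiniteDimensional ℝ V1]
    [NormedAddCommGroup V2] [InnerProductSpace ℝ V2] [FiniteDimensional ℝ V2]
    (ω0 : V0 → V0 → ℝ) (ω1 : V1 → V1 → ℝ) (ω2 : V2 → V2 → ℝ)
    (hω0 : IsSymplecticForm ω0) (hω1 : IsSymplecticForm ω1) (hω2 : IsSymplecticForm ω2)
    (Λ01 : Set (V0 × V1)) (Λ12 : Set (V1 × V2))
    (h01 : IsLagrangianSubspace
      (fun p q : V0 × V1 => -(ω0 p.1 q.1) + ω1 p.2 q.2) Λ01)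
    (h12 : IsLagrangianSubspace
      (fun p q : V1 × V2 => -(ω1 p.1 q.1) + ω2 p.2 q.2) Λ12)
    (htrans : ∀ x : (V0 × V1) × (V1 × V2), ∃ a ∈ Λ01, ∃ b ∈ Λ12,
      ∃ (d0 : V0) (d1 : V1) (d2 : V2),
        x = ((a.1 + d0, a.2 + d1), (b.1 + d1, b.2 + d2)))
    -- the composed Lagrangian `Λ₀₂ ⊂ V₀ × V₂` (with the ℓ² inner product)
    (Λ02 : Submodule ℝ (WithLp 2 (V0 × V2)))
    (hΛ02 : ∀ p : WithLp 2 (V0 × V2), p ∈ Λ02 ↔ ∃ v1 : V1,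
      ((WithLp.equiv 2 (V0 × V2) p).1, v1) ∈ Λ01 ∧
      (v1, (WithLp.equiv 2 (V0 × V2) p).2) ∈ Λ12)
    -- the transposed Lagrangian `(Λ₀₁ × Λ₁₂)ᵀ ⊂ V₀ × V₂ × V₁ × V₁`
    (T : Submodule ℝ (WithLp 2 (WithLp 2 (V0 × V2) × WithLp 2 (V1 × V1))))
    (hT : ∀ w : WithLp 2 (WithLp 2 (V0 × V2) × WithLp 2 (V1 × V1)), w ∈ T ↔
      (((WithLp.equiv 2 (V0 × V2)
          ((WithLp.equiv 2 (WithLp 2 (V0 × V2) × WithLp 2 (V1 × V1)) w).1)).1,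
        (WithLp.equiv 2 (V1 × V1)
          ((WithLp.equiv 2 (WithLp 2 (V0 × V2) × WithLp 2 (V1 × V1)) w).2)).1) ∈ Λ01 ∧
       ((WithLp.equiv 2 (V1 × V1)
          ((WithLp.equiv 2 (WithLp 2 (V0 × V2) × WithLp 2 (V1 × V1)) w).2)).2,
        (WithLp.equiv 2 (V0 × V2)
          ((WithLp.equiv 2 (WithLp 2 (V0 × V2) × WithLp 2 (V1 × V1)) w).1)).2) ∈ Λ12)) :
    ∃ C : ℝ, 0 < C ∧ ∀ w : WithLp 2 (WithLp 2 (V0 × V2) × WithLp 2 (V1 × V1)),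
      ‖w‖ ≤ C * (
        ‖(Submodule.orthogonalProjectionOnto Λ02
            ((WithLp.equiv 2 (WithLp 2 (V0 × V2) × WithLp 2 (V1 × V1)) w).1) :
          WithLp 2 (V0 × V2))‖ +
        ‖(WithLp.equiv 2 (V1 × V1)
            ((WithLp.equiv 2 (WithLp 2 (V0 × V2) × WithLp 2 (V1 × V1)) w).2)).1 -
         (WithLp.equiv 2 (V1 × V1)
            ((WithLp.equiv 2 (WithLp 2 (V0 × V2) × WithLp 2 (V1 × V1)) w).2)).2‖ +
        ‖(Submodule.orthogonalProjectionOnto Tᗮ w :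
          WithLp 2 (WithLp 2 (V0 × V2) × WithLp 2 (V1 × V1)))‖) := by

  classical
  obtain ⟨hl0, hs0, hn0⟩ := hω0
  obtain ⟨hl1, hs1, hn1⟩ := hω1
  obtain ⟨hl2, hs2, hn2⟩ := hω2
  have z0 : ∀ z : V0, ω0 0 z = 0 := by
    intro z; have := hl0 1 0 0 z; simp at this; linarith
  have z1 : ∀ z : V1, ω1 0 z = 0 := by
    intro z; have := hl1 1 0 0 z; simp at this; linarith
  have z2 : ∀ z : V2, ω2 0 z = 0 := by
    intro z; have := hl2 1 0 0 z; simp at this; linarith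
  have add1 : ∀ x u v : V1, ω1 x (u + v) = ω1 x u + ω1 x v := by
    intro x u v
    have h := hl1 1 u v x
    simp at h
    rw [hs1 x (u + v), h, hs1 u x, hs1 v x]; ring
  have neg1 : ∀ x u : V1, ω1 x (-u) = - ω1 x u := by
    intro x u
    have h := hl1 (-1) u 0 x
    simp at h
    rw [hs1 x (-u), h, hs1 u x, z1]; ring
  set W := WithLp 2 (WithLp 2 (V0 × V2) × WithLp 2 (V1 × V1)) with hWdef
  let F : W →ₗ[ℝ] (WithLp 2 (V0 × V2)) × V1 × W :=
  { toFun := fun w =>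
      ((Submodule.orthogonalProjectionOnto Λ02
          ((WithLp.equiv 2 (WithLp 2 (V0 × V2) × WithLp 2 (V1 × V1)) w).1) :
        WithLp 2 (V0 × V2)),
       (WithLp.equiv 2 (V1 × V1)
          ((WithLp.equiv 2 (WithLp 2 (V0 × V2) × WithLp 2 (V1 × V1)) w).2)).1 -
       (WithLp.equiv 2 (V1 × V1)
          ((WithLp.equiv 2 (WithLp 2 (V0 × V2) × WithLp 2 (V1 × V1)) w).2)).2,
       (Submodule.orthogonalProjectionOnto Tᗮ w : W))
    map_add' := by
      intro x y
      refine Prod.ext ?_ (Prod.ext ?_ ?_)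
      · have h : (WithLp.equiv 2 (WithLp 2 (V0 × V2) × WithLp 2 (V1 × V1)) (x + y)).1
            = (WithLp.equiv 2 (WithLp 2 (V0 × V2) × WithLp 2 (V1 × V1)) x).1
            + (WithLp.equiv 2 (WithLp 2 (V0 × V2) × WithLp 2 (V1 × V1)) y).1 := rfl
        rw [h, map_add, Submodule.coe_add]
        rfl
      · exact (sub_add_sub_comm _ _ _ _).symm
      · show (↑(Submodule.orthogonalProjectionOnto Tᗮ (x + y)) : W) = _
        rw [map_add, Submodule.coe_add]
        rfl
    map_smul' := by
      intro c x
      refine Prod.ext ?_ (Prod.ext ?_ ?_)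
      · have h : (WithLp.equiv 2 (WithLp 2 (V0 × V2) × WithLp 2 (V1 × V1)) (c • x)).1
            = c • (WithLp.equiv 2 (WithLp 2 (V0 × V2) × WithLp 2 (V1 × V1)) x).1 := rfl
        rw [h, map_smul, Submodule.coe_smul]
        rfl
      · exact (smul_sub c _ _).symm
      · show (↑(Submodule.orthogonalProjectionOnto Tᗮ (c • x)) : W) = _
        rw [map_smul, Submodule.coe_smul]
        rfl }
  have hker : LinearMap.ker F = ⊥ := by
    rw [LinearMap.ker_eq_bot']
    intro w hw
    simp only [F, LinearMap.coe_mk, AddHom.coe_mk, Prod.mk_eq_zero] at hw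
    obtain ⟨h1, h2, h3⟩ := hw
    have h3' : Submodule.orthogonalProjectionOnto Tᗮ w = 0 := Submodule.coe_eq_zero.mp h3
    have hwT : w ∈ T := by
      have hmem := Submodule.orthogonalProjectionOnto_eq_zero_iff.mp h3'
      rwa [Submodule.orthogonal_orthogonal] at hmem
    obtain ⟨hm1, hm2⟩ := (hT w).mp hwT
    have hξ : (WithLp.equiv 2 (V1 × V1)
          ((WithLp.equiv 2 (WithLp 2 (V0 × V2) × WithLp 2 (V1 × V1)) w).2)).1 =
        (WithLp.equiv 2 (V1 × V1)
          ((WithLp.equiv 2 (WithLp 2 (V0 × V2) × WithLp 2 (V1 × V1)) w).2)).2 :=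
      sub_eq_zero.mp h2
    rw [hξ] at hm1
    have hw1 : (WithLp.equiv 2 (WithLp 2 (V0 × V2) × WithLp 2 (V1 × V1)) w).1 ∈ Λ02 :=
      (hΛ02 _).mpr ⟨_, hm1, hm2⟩
    have hw1z : (WithLp.equiv 2 (WithLp 2 (V0 × V2) × WithLp 2 (V1 × V1)) w).1 = 0 := by
      have hself := Submodule.starProjection_eq_self_iff.mpr hw1
      rw [Submodule.starProjection_apply] at hself
      rw [hself] at h1
      exact h1
    have hz0 : ((WithLp.equiv 2 (V0 × V2))
        ((WithLp.equiv 2 (WithLp 2 (V0 × V2) × WithLp 2 (V1 × V1)) w).1)).1 = 0 := by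
      rw [hw1z]; rfl
    have hz2 : ((WithLp.equiv 2 (V0 × V2))
        ((WithLp.equiv 2 (WithLp 2 (V0 × V2) × WithLp 2 (V1 × V1)) w).1)).2 = 0 := by
      rw [hw1z]; rfl
    rw [hz0] at hm1
    rw [hz2] at hm2
    -- now hm1 : (0, ξ₁) ∈ Λ01, hm2 : (ξ₁, 0) ∈ Λ12
    set ξ1 := (WithLp.equiv 2 (V1 × V1)
        ((WithLp.equiv 2 (WithLp 2 (V0 × V2) × WithLp 2 (V1 × V1)) w).2)).2 with hξ1def
    have hxi1 : ξ1 = 0 := by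
      apply hn1
      intro y
      obtain ⟨a, ha, b, hb, d0, d1, d2, hx⟩ := htrans ((0, y), (0, 0))
      have hy : y = a.2 + d1 := congrArg (fun p => p.1.2) hx
      have hb1 : (0 : V1) = b.1 + d1 := congrArg (fun p => p.2.1) hx
      have p1 : -(ω0 (0 : V0) a.1) + ω1 ξ1 a.2 = 0 := by
        have hmem := hm1
        rw [h01] at hmem
        exact hmem a ha
      have p2 : -(ω1 ξ1 b.1) + ω2 (0 : V2) b.2 = 0 := by
        have hmem := hm2
        rw [h12] at hmem
        exact hmem b hb
      have e1 : ω1 ξ1 a.2 = 0 := by rw [z0] at p1; linarith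
      have e2 : ω1 ξ1 b.1 = 0 := by rw [z2] at p2; linarith
      have hd1 : d1 = -b.1 := eq_neg_of_add_eq_zero_right hb1.symm
      rw [hy, add1, hd1, neg1, e1, e2]; ring
    have hw2z : (WithLp.equiv 2 (WithLp 2 (V0 × V2) × WithLp 2 (V1 × V1)) w).2 = 0 := by
      apply (WithLp.equiv 2 (V1 × V1)).injective
      refine Prod.ext ?_ ?_
      · show (WithLp.equiv 2 (V1 × V1)
            ((WithLp.equiv 2 (WithLp 2 (V0 × V2) × WithLp 2 (V1 × V1)) w).2)).1 = _
        rw [hξ, hxi1]; rfl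
      · show ξ1 = _
        rw [hxi1]; rfl
    exact (WithLp.equiv 2 (WithLp 2 (V0 × V2) × WithLp 2 (V1 × V1))).injective
      (Prod.ext hw1z hw2z)
  obtain ⟨K, hKpos, hA⟩ := F.exists_antilipschitzWith hker
  refine ⟨(K : ℝ) + 1, by positivity, fun w => ?_⟩
  have h1 : ‖w‖ ≤ (K : ℝ) * ‖F w‖ := by
    have := hA.le_mul_dist w 0
    simpa [dist_eq_norm, map_zero] using this
  set a := ‖(Submodule.orthogonalProjectionOnto Λ02
      ((WithLp.equiv 2 (WithLp 2 (V0 × V2) × WithLp 2 (V1 × V1)) w).1) :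
    WithLp 2 (V0 × V2))‖ with hadef
  set b := ‖(WithLp.equiv 2 (V1 × V1)
      ((WithLp.equiv 2 (WithLp 2 (V0 × V2) × WithLp 2 (V1 × V1)) w).2)).1 -
    (WithLp.equiv 2 (V1 × V1)
      ((WithLp.equiv 2 (WithLp 2 (V0 × V2) × WithLp 2 (V1 × V1)) w).2)).2‖ with hbdef
  set c := ‖(Submodule.orthogonalProjectionOnto Tᗮ w : W)‖ with hcdef
  have h2 : ‖F w‖ ≤ a + b + c := by
    have hFw : ‖F w‖ = max a (max b c) := by
      rw [Prod.norm_def, Prod.norm_def]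
      rfl
    rw [hFw]
    have ha : 0 ≤ a := norm_nonneg _
    have hb : 0 ≤ b := norm_nonneg _
    have hc : 0 ≤ c := norm_nonneg _
    apply max_le
    · linarith
    · apply max_le <;> linarith
  calc ‖w‖ ≤ (K : ℝ) * ‖F w‖ := h1
    _ ≤ (K : ℝ) * (a + b + c) := by
        apply mul_le_mul_of_nonneg_left h2 (by positivity)
    _ ≤ ((K : ℝ) + 1) * (a + b + c) := by
        have hsum : 0 ≤ a + b + c := by positivity
        nlinarith
end

section
/- Let V₀, V₁, V₂ be symplectic vector spaces with Λ₀₁, Λ₁₂ as above (product transverse to V₀ × Δ_{V₁} × V₂), and Λ₀₂ the composed Lagrangian. Then there is a constant C such that for every (ξ₀₂', ξ₁', ξ₁) ∈ V₀ × V₂ × V₁ × V₁: |π₀₂⊥ ξ₀₂'| ≤ C (|π⊥(ξ₀₂',ξ₁',ξ₁)| + |ξ₁' − ξ₁|), where π₀₂⊥ is orthogonal projection onto the orthogonal complement of Λ₀₂ in V₀ × V₂ and π⊥ is orthogonal projection onto the orthogonal complement of (Λ₀₁ × Λ₁₂)ᵀ. -/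
set_option maxHeartbeats 2000000
set_option synthInstance.maxHeartbeats 400000


lemma aux_fst_le {α β : Type*} [NormedAddCommGroup α] [NormedAddCommGroup β]
    (x : WithLp 2 (α × β)) : ‖(WithLp.equiv 2 (α × β) x).1‖ ≤ ‖x‖ := by
  rw [WithLp.prod_norm_eq_of_L2, WithLp.equiv_apply, WithLp.ofLp_fst]
  calc ‖x.fst‖ = Real.sqrt (‖x.fst‖^2) := by rw [Real.sqrt_sq (norm_nonneg _)]
    _ ≤ _ := Real.sqrt_le_sqrt (le_add_of_nonneg_right (by positivity))

lemma aux_snd_le {α β : Type*} [NormedAddCommGroup α] [NormedAddCommGroup β]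
    (x : WithLp 2 (α × β)) : ‖(WithLp.equiv 2 (α × β) x).2‖ ≤ ‖x‖ := by
  rw [WithLp.prod_norm_eq_of_L2, WithLp.equiv_apply, WithLp.ofLp_snd]
  calc ‖x.snd‖ = Real.sqrt (‖x.snd‖^2) := by rw [Real.sqrt_sq (norm_nonneg _)]
    _ ≤ _ := Real.sqrt_le_sqrt (le_add_of_nonneg_left (by positivity))

/-- Quantitative transversality, second estimate: every `(ξ₀₂', ξ₁', ξ₁)` satisfies
`|π₀₂⊥ ξ₀₂'| ≤ C (|π⊥(ξ₀₂',ξ₁',ξ₁)| + |ξ₁' − ξ₁|)`, where `π₀₂⊥` is the orthogonal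
projection onto the orthogonal complement of the composed Lagrangian `Λ₀₂` and `π⊥`
the orthogonal projection onto the orthogonal complement of `(Λ₀₁ × Λ₁₂)ᵀ`. -/
theorem stmt_5 {V0 V1 V2 : Type*}
    [NormedAddCommGroup V0] [InnerProductSpace ℝ V0] [FiniteDimensional ℝ V0]
    [NormedAddCommGroup V1] [InnerProductSpace ℝ V1] [FiniteDimensional ℝ V1]
    [NormedAddCommGroup V2] [InnerProductSpace ℝ V2] [FiniteDimensional ℝ V2]
    (ω0 : V0 → V0 → ℝ) (ω1 : V1 → V1 → ℝ) (ω2 : V2 → V2 → ℝ)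
    (hω0 : IsSymplecticForm ω0) (hω1 : IsSymplecticForm ω1) (hω2 : IsSymplecticForm ω2)
    (Λ01 : Set (V0 × V1)) (Λ12 : Set (V1 × V2))
    (h01 : IsLagrangianSubspace
      (fun p q : V0 × V1 => -(ω0 p.1 q.1) + ω1 p.2 q.2) Λ01)
    (h12 : IsLagrangianSubspace
      (fun p q : V1 × V2 => -(ω1 p.1 q.1) + ω2 p.2 q.2) Λ12)
    (htrans : ∀ x : (V0 × V1) × (V1 × V2), ∃ a ∈ Λ01, ∃ b ∈ Λ12,
      ∃ (d0 : V0) (d1 : V1) (d2 : V2),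
        x = ((a.1 + d0, a.2 + d1), (b.1 + d1, b.2 + d2)))
    -- the composed Lagrangian `Λ₀₂ ⊂ V₀ × V₂` (with the ℓ² inner product)
    (Λ02 : Submodule ℝ (WithLp 2 (V0 × V2)))
    (hΛ02 : ∀ p : WithLp 2 (V0 × V2), p ∈ Λ02 ↔ ∃ v1 : V1,
      ((WithLp.equiv 2 (V0 × V2) p).1, v1) ∈ Λ01 ∧
      (v1, (WithLp.equiv 2 (V0 × V2) p).2) ∈ Λ12)
    -- the transposed Lagrangian `(Λ₀₁ × Λ₁₂)ᵀ ⊂ V₀ × V₂ × V₁ × V₁`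
    (T : Submodule ℝ (WithLp 2 (WithLp 2 (V0 × V2) × WithLp 2 (V1 × V1))))
    (hT : ∀ w : WithLp 2 (WithLp 2 (V0 × V2) × WithLp 2 (V1 × V1)), w ∈ T ↔
      (((WithLp.equiv 2 (V0 × V2)
          ((WithLp.equiv 2 (WithLp 2 (V0 × V2) × WithLp 2 (V1 × V1)) w).1)).1,
        (WithLp.equiv 2 (V1 × V1)
          ((WithLp.equiv 2 (WithLp 2 (V0 × V2) × WithLp 2 (V1 × V1)) w).2)).1) ∈ Λ01 ∧
       ((WithLp.equiv 2 (V1 × V1)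
          ((WithLp.equiv 2 (WithLp 2 (V0 × V2) × WithLp 2 (V1 × V1)) w).2)).2,
        (WithLp.equiv 2 (V0 × V2)
          ((WithLp.equiv 2 (WithLp 2 (V0 × V2) × WithLp 2 (V1 × V1)) w).1)).2) ∈ Λ12)) :
    ∃ C : ℝ, 0 < C ∧ ∀ w : WithLp 2 (WithLp 2 (V0 × V2) × WithLp 2 (V1 × V1)),
      ‖(Submodule.orthogonalProjectionOnto Λ02ᗮ
          ((WithLp.equiv 2 (WithLp 2 (V0 × V2) × WithLp 2 (V1 × V1)) w).1) :
        WithLp 2 (V0 × V2))‖ ≤ C * (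
        ‖(Submodule.orthogonalProjectionOnto Tᗮ w :
          WithLp 2 (WithLp 2 (V0 × V2) × WithLp 2 (V1 × V1)))‖ +
        ‖(WithLp.equiv 2 (V1 × V1)
            ((WithLp.equiv 2 (WithLp 2 (V0 × V2) × WithLp 2 (V1 × V1)) w).2)).1 -
         (WithLp.equiv 2 (V1 × V1)
            ((WithLp.equiv 2 (WithLp 2 (V0 × V2) × WithLp 2 (V1 × V1)) w).2)).2‖) := by
  classical
  set W := WithLp 2 (WithLp 2 (V0 × V2) × WithLp 2 (V1 × V1)) with hW
  let E : W ≃ₗ[ℝ] (WithLp 2 (V0 × V2) × WithLp 2 (V1 × V1)) :=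
    WithLp.linearEquiv 2 ℝ _
  let E1 : WithLp 2 (V1 × V1) ≃ₗ[ℝ] (V1 × V1) := WithLp.linearEquiv 2 ℝ _
  let pr02 : W →ₗ[ℝ] WithLp 2 (V0 × V2) :=
    (LinearMap.fst ℝ _ _) ∘ₗ E.toLinearMap
  let f : T →ₗ[ℝ] V1 :=
    ((LinearMap.fst ℝ V1 V1) - (LinearMap.snd ℝ V1 V1)) ∘ₗ E1.toLinearMap ∘ₗ
      (LinearMap.snd ℝ _ _) ∘ₗ E.toLinearMap ∘ₗ T.subtype
  let q : T →ₗ[ℝ] ↥Λ02ᗮ :=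
    (Submodule.orthogonalProjectionOnto Λ02ᗮ).toLinearMap ∘ₗ pr02 ∘ₗ T.subtype
  have hker : LinearMap.ker f ≤ LinearMap.ker q := by
    intro t ht
    have ht' : (WithLp.equiv 2 (V1 × V1) ((WithLp.equiv 2 _ (t : W)).2)).1 =
        (WithLp.equiv 2 (V1 × V1) ((WithLp.equiv 2 _ (t : W)).2)).2 := by
      have := LinearMap.mem_ker.mp ht
      exact sub_eq_zero.mp (show (WithLp.equiv 2 (V1 × V1) ((WithLp.equiv 2 _ (t : W)).2)).1 -
          (WithLp.equiv 2 (V1 × V1) ((WithLp.equiv 2 _ (t : W)).2)).2 = 0 from this)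
    have hmem := (hT (t : W)).mp t.2
    have hin : (WithLp.equiv 2 _ (t : W)).1 ∈ Λ02 := by
      rw [hΛ02]
      exact ⟨(WithLp.equiv 2 (V1 × V1) ((WithLp.equiv 2 _ (t : W)).2)).1,
        hmem.1, ht' ▸ hmem.2⟩
    have : q t = 0 := by
      simp only [q, LinearMap.comp_apply, ContinuousLinearMap.coe_coe]
      exact Submodule.orthogonalProjectionOnto_eq_zero_iff.mpr (Submodule.le_orthogonal_orthogonal _ hin)
    exact LinearMap.mem_ker.mpr this
  let L : ↥(LinearMap.range f) →ₗ[ℝ] ↥Λ02ᗮ :=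
    (Submodule.liftQ (LinearMap.ker f) q hker) ∘ₗ
      (f.quotKerEquivRange).symm.toLinearMap
  let Lc : ↥(LinearMap.range f) →L[ℝ] ↥Λ02ᗮ := LinearMap.toContinuousLinearMap L
  have hLq : ∀ t : T, q t = Lc ⟨f t, LinearMap.mem_range_self f t⟩ := by
    intro t
    show q t = L ⟨f t, _⟩
    simp only [L, LinearMap.comp_apply, LinearEquiv.coe_coe]
    rw [f.quotKerEquivRange_symm_apply_image, Submodule.mkQ_apply,
      Submodule.liftQ_apply]
  refine ⟨2 * ‖Lc‖ + 1, by positivity, fun w => ?_⟩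
  set a := Submodule.orthogonalProjectionOnto T w with ha
  set b := Submodule.orthogonalProjectionOnto Tᗮ w with hb
  have hw : (a : W) + (b : W) = w :=
    T.starProjection_add_starProjection_orthogonal w
  have hwb : w - (a : W) = (b : W) := by rw [← hw]; abel
  -- components
  set ξ := (WithLp.equiv 2 _ w).1 with hξ
  set η' := (WithLp.equiv 2 (V1 × V1) ((WithLp.equiv 2 _ w).2)).1 with hη'
  set η := (WithLp.equiv 2 (V1 × V1) ((WithLp.equiv 2 _ w).2)).2 with hη
  have P := Submodule.orthogonalProjectionOnto Λ02ᗮ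
  -- step 1 : ‖P ξ‖ ≤ ‖P (ξ - pr02 a)‖ + ‖P (pr02 a)‖
  have h1 : ‖(Submodule.orthogonalProjectionOnto Λ02ᗮ ξ : WithLp 2 (V0 × V2))‖ ≤
      ‖(Submodule.orthogonalProjectionOnto Λ02ᗮ (ξ - pr02 (a : W)) : WithLp 2 (V0 × V2))‖ +
      ‖(Submodule.orthogonalProjectionOnto Λ02ᗮ (pr02 (a : W)) : WithLp 2 (V0 × V2))‖ := by
    have : ξ = (ξ - pr02 (a : W)) + pr02 (a : W) := by abel
    calc ‖(Submodule.orthogonalProjectionOnto Λ02ᗮ ξ : WithLp 2 (V0 × V2))‖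
        = ‖(Submodule.orthogonalProjectionOnto Λ02ᗮ ((ξ - pr02 (a : W)) + pr02 (a : W)) :
            WithLp 2 (V0 × V2))‖ := by rw [← this]
      _ ≤ _ := by rw [map_add]; exact norm_add_le _ _
  -- bound on first term
  have h2 : ‖(Submodule.orthogonalProjectionOnto Λ02ᗮ (ξ - pr02 (a : W)) : WithLp 2 (V0 × V2))‖ ≤
      ‖(b : W)‖ := by
    have hle : ‖(Submodule.orthogonalProjectionOnto Λ02ᗮ (ξ - pr02 (a : W)) :
        WithLp 2 (V0 × V2))‖ ≤ ‖ξ - pr02 (a : W)‖ := by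
      have := (Submodule.orthogonalProjectionOnto Λ02ᗮ).le_opNorm (ξ - pr02 (a : W))
      have h1' := Submodule.orthogonalProjectionOnto_norm_le Λ02ᗮ
      have hcoe : ‖(Submodule.orthogonalProjectionOnto Λ02ᗮ (ξ - pr02 (a : W)) :
          WithLp 2 (V0 × V2))‖ = ‖Submodule.orthogonalProjectionOnto Λ02ᗮ (ξ - pr02 (a : W))‖ := rfl
      nlinarith [norm_nonneg (ξ - pr02 (a : W))]
    refine hle.trans ?_
    have : ξ - pr02 (a : W) = (WithLp.equiv 2 _ ((b : W))).1 := by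
      rw [← hwb]; rfl
    rw [this]
    exact aux_fst_le _
  -- bound on second term
  have h3 : ‖(Submodule.orthogonalProjectionOnto Λ02ᗮ (pr02 (a : W)) : WithLp 2 (V0 × V2))‖ ≤
      ‖Lc‖ * ‖f a‖ := by
    have : (Submodule.orthogonalProjectionOnto Λ02ᗮ (pr02 (a : W)) : WithLp 2 (V0 × V2)) =
        (q a : WithLp 2 (V0 × V2)) := rfl
    rw [this, hLq a]
    calc ‖(Lc ⟨f a, _⟩ : WithLp 2 (V0 × V2))‖ = ‖Lc ⟨f a, LinearMap.mem_range_self f a⟩‖ := rfl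
      _ ≤ ‖Lc‖ * ‖(⟨f a, LinearMap.mem_range_self f a⟩ : ↥(LinearMap.range f))‖ :=
          Lc.le_opNorm _
      _ = ‖Lc‖ * ‖f a‖ := rfl
  -- bound on ‖f a‖
  have h4 : ‖f a‖ ≤ 2 * ‖(b : W)‖ + ‖η' - η‖ := by
    set a21 := (WithLp.equiv 2 (V1 × V1) ((WithLp.equiv 2 _ ((a : W))).2)).1 with ha21
    set a22 := (WithLp.equiv 2 (V1 × V1) ((WithLp.equiv 2 _ ((a : W))).2)).2 with ha22
    have hfa : f a = a21 - a22 := rfl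
    have hc1 : ‖η' - a21‖ ≤ ‖(b : W)‖ := by
      have e1 : η' - a21 = (WithLp.equiv 2 (V1 × V1)
          ((WithLp.equiv 2 _ (w - (a : W))).2)).1 := rfl
      rw [e1, hwb]
      exact (aux_fst_le _).trans (aux_snd_le _)
    have hc2 : ‖η - a22‖ ≤ ‖(b : W)‖ := by
      have e2 : η - a22 = (WithLp.equiv 2 (V1 × V1)
          ((WithLp.equiv 2 _ (w - (a : W))).2)).2 := rfl
      rw [e2, hwb]
      exact (aux_snd_le _).trans (aux_snd_le _)
    have : a21 - a22 = -(η' - a21) + (η' - η) + (η - a22) := by abel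
    rw [hfa, this]
    calc ‖-(η' - a21) + (η' - η) + (η - a22)‖ ≤ ‖-(η' - a21) + (η' - η)‖ + ‖η - a22‖ :=
          norm_add_le _ _
      _ ≤ ‖-(η' - a21)‖ + ‖η' - η‖ + ‖η - a22‖ := by
          gcongr; exact norm_add_le _ _
      _ = ‖η' - a21‖ + ‖η' - η‖ + ‖η - a22‖ := by rw [norm_neg]
      _ ≤ ‖(b : W)‖ + ‖η' - η‖ + ‖(b : W)‖ := by gcongr
      _ = 2 * ‖(b : W)‖ + ‖η' - η‖ := by ring
  have hLcnn : (0:ℝ) ≤ ‖Lc‖ := ContinuousLinearMap.opNorm_nonneg _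
  have hbnn : (0:ℝ) ≤ ‖(b : W)‖ := norm_nonneg _
  have hdnn : (0:ℝ) ≤ ‖η' - η‖ := norm_nonneg _
  calc ‖(Submodule.orthogonalProjectionOnto Λ02ᗮ ξ : WithLp 2 (V0 × V2))‖
      ≤ ‖(b : W)‖ + ‖Lc‖ * ‖f a‖ := by linarith
    _ ≤ ‖(b : W)‖ + ‖Lc‖ * (2 * ‖(b : W)‖ + ‖η' - η‖) := by nlinarith
    _ ≤ (2 * ‖Lc‖ + 1) * (‖(b : W)‖ + ‖η' - η‖) := by nlinarith
end

section
/- Compatibility of two graph linearizations: let X be a finite-dimensional vector space, N ⊂ X a C¹ submanifold through 0, and Δ ⊂ X a subspace transverse to N at 0. Then there exists a local C¹ diffeomorphism Φ of X near 0 with Φ(0) = 0 and dΦ(0) = Id such that Φ(T₀N ∩ U) ⊂ N and Φ(Δ ∩ U) ⊂ Δ for some neighborhood U of 0. -/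
set_option maxHeartbeats 1000000

open Filter Set Topology

/-- Given `K ⊔ Δ = ⊤` in a finite-dimensional space, there is a complement of `K`
contained in `Δ`. -/
lemma exists_compl_le_aux {X : Type*} [NormedAddCommGroup X] [NormedSpace ℝ X]
    [FiniteDimensional ℝ X] (K Δ : Submodule ℝ X) (h : K ⊔ Δ = ⊤) :
    ∃ C : Submodule ℝ X, C ≤ Δ ∧ IsCompl K C := by
  obtain ⟨C', hC'⟩ := Submodule.exists_isCompl ((K ⊓ Δ).comap Δ.subtype)
  refine ⟨C'.map Δ.subtype, Submodule.map_subtype_le _ _, ?_, ?_⟩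
  · rw [disjoint_iff, eq_bot_iff]
    intro x hx
    obtain ⟨hxK, hxC⟩ := Submodule.mem_inf.1 hx
    obtain ⟨c, hc, rfl⟩ := Submodule.mem_map.1 hxC
    have hcK : c ∈ (K ⊓ Δ).comap Δ.subtype :=
      Submodule.mem_comap.2 (Submodule.mem_inf.2 ⟨hxK, c.2⟩)
    have h0 : c ∈ ((K ⊓ Δ).comap Δ.subtype) ⊓ C' := Submodule.mem_inf.2 ⟨hcK, hc⟩
    rw [hC'.1.eq_bot, Submodule.mem_bot] at h0
    simp [h0]
  · rw [codisjoint_iff, eq_top_iff, ← h]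
    have h2 := congrArg (Submodule.map Δ.subtype) hC'.2.eq_top
    rw [Submodule.map_sup, Submodule.map_comap_subtype, Submodule.map_subtype_top] at h2
    have hΔle : Δ ≤ K ⊔ C'.map Δ.subtype := by
      calc Δ = Δ ⊓ (K ⊓ Δ) ⊔ C'.map Δ.subtype := h2.symm
      _ ≤ K ⊔ C'.map Δ.subtype := sup_le_sup (le_trans inf_le_right inf_le_left) le_rfl
    exact sup_le le_sup_left hΔle

/-- Compatibility of two graph linearizations: if `N ⊂ X` is a `C¹` submanifold through
`0` (cut out by a submersion `g`) and `Δ ⊂ X` is a subspace transverse to `N` at `0`,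
then there is a local `C¹` diffeomorphism `Φ` of `X` near `0` with `Φ(0) = 0`,
`dΦ(0) = Id`, `Φ(T₀N ∩ U) ⊂ N` and `Φ(Δ ∩ U) ⊂ Δ`. -/
theorem stmt_17 {X Y : Type*}
    [NormedAddCommGroup X] [NormedSpace ℝ X] [FiniteDimensional ℝ X]
    [NormedAddCommGroup Y] [NormedSpace ℝ Y] [FiniteDimensional ℝ Y]
    (N : Set X) (g : X → Y) (U : Set X)
    (hU : IsOpen U) (h0U : (0:X) ∈ U) (h0N : (0:X) ∈ N)
    (hg : ContDiffOn ℝ 1 g U) (hg0 : g 0 = 0)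
    (hsurj : Function.Surjective (fderiv ℝ g 0))
    (hNU : N ∩ U = {x ∈ U | g x = 0})
    (Δ : Submodule ℝ X)
    (htrans : LinearMap.ker (fderiv ℝ g 0 : X →ₗ[ℝ] Y) ⊔ Δ = ⊤) :
    ∃ (Φ : X → X) (V : Set X), IsOpen V ∧ (0:X) ∈ V ∧ Φ 0 = 0 ∧
      HasFDerivAt Φ (ContinuousLinearMap.id ℝ X) 0 ∧
      ContDiffOn ℝ 1 Φ V ∧ Set.InjOn Φ V ∧
      (∀ x ∈ (LinearMap.ker (fderiv ℝ g 0 : X →ₗ[ℝ] Y) : Submodule ℝ X).carrier ∩ V, Φ x ∈ N) ∧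
      (∀ x ∈ (Δ : Set X) ∩ V, Φ x ∈ (Δ : Set X)) := by
  classical
  set dg : X →L[ℝ] Y := fderiv ℝ g 0 with hdg
  set K : Submodule ℝ X := LinearMap.ker (dg : X →ₗ[ℝ] Y) with hK
  obtain ⟨C, hCΔ, hKC⟩ := exists_compl_le_aux K Δ htrans
  -- g is C¹ at 0
  have hgat : ContDiffAt ℝ 1 g 0 := hg.contDiffAt (hU.mem_nhds h0U)
  have hgd : HasFDerivAt g dg 0 := (hgat.differentiableAt one_ne_zero).hasFDerivAt
  -- the inverse of dg restricted to C
  have hbij : Function.Bijective ((dg : X →ₗ[ℝ] Y).comp C.subtype) := by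
    constructor
    · intro c₁ c₂ hcc
      have : ((c₁ : X) - c₂) ∈ K ⊓ C := by
        refine ⟨?_, C.sub_mem c₁.2 c₂.2⟩
        simp only [hK, LinearMap.mem_ker, map_sub]
        simpa [sub_eq_zero] using hcc
      rw [hKC.1.eq_bot] at this
      exact Subtype.ext (by simpa [sub_eq_zero] using this)
    · intro y
      obtain ⟨x, hx⟩ := hsurj y
      obtain ⟨k, c, hkc, -⟩ := Submodule.existsUnique_add_of_isCompl hKC x
      refine ⟨c, ?_⟩
      have hk : dg (k : X) = 0 := k.2
      simp only [LinearMap.comp_apply, Submodule.subtype_apply, ContinuousLinearMap.coe_coe]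
      rw [show (c : X) = x - k by rw [← hkc]; abel]
      simp [map_sub, hk, hx]
  set e : C ≃ₗ[ℝ] Y := LinearEquiv.ofBijective _ hbij with he
  set A : Y →L[ℝ] X := (C.subtype.comp e.symm.toLinearMap).toContinuousLinearMap with hA
  have hA_mem : ∀ y, A y ∈ C := fun y => (e.symm y).2
  have hdgA : ∀ y, dg (A y) = y := by
    intro y
    have h1 := e.apply_symm_apply y
    have h2 : A y = ((e.symm y : C) : X) := by
      simp [hA]
    rw [h2]
    exact h1
  have hAdg : ∀ c ∈ C, A (dg c) = c := by
    intro c hc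
    have := e.symm_apply_apply ⟨c, hc⟩
    have h2 : e ⟨c, hc⟩ = dg c := rfl
    calc A (dg c) = ((e.symm (e ⟨c, hc⟩)) : X) := by rw [h2]; rfl
    _ = c := by rw [this]
  -- the projection onto K along C
  set P : X →L[ℝ] X := (K.subtype.comp (K.linearProjOfIsCompl C hKC)).toContinuousLinearMap
    with hP
  have hP_mem : ∀ x, P x ∈ K := fun x => (K.linearProjOfIsCompl C hKC x).2
  have hPK : ∀ x ∈ K, P x = x := by
    intro x hx
    have := Submodule.linearProjOfIsCompl_apply_left hKC ⟨x, hx⟩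
    exact congrArg (Subtype.val) this
  have hPC : ∀ x, x - P x ∈ C := by
    intro x
    have : (K.linearProjOfIsCompl C hKC x : X) + (C.linearProjOfIsCompl K hKC.symm x : X) = x :=
      Submodule.projection_add_projection_eq_self hKC x
    have h2 : x - P x = (C.linearProjOfIsCompl K hKC.symm x : X) := by
      rw [sub_eq_iff_eq_add']; exact this.symm
    rw [h2]; exact (C.linearProjOfIsCompl K hKC.symm x).2
  have hP0 : P 0 = 0 := map_zero P
  -- the map ψ
  set ψ : X → X := fun x => P x + A (g x) with hψ
  have hid : ∀ x, P x + A (dg x) = x := by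
    intro x
    have h1 : dg x = dg (x - P x) := by
      have : dg (P x) = 0 := hP_mem x
      simp [map_sub, this]
    rw [h1, hAdg _ (hPC x)]; abel
  have hψ0 : ψ 0 = 0 := by simp [hψ, hg0, hP0]
  have hψcd : ContDiffAt ℝ 1 ψ 0 :=
    (P.contDiff.contDiffAt).add ((A.contDiff.contDiffAt).comp 0 hgat)
  have hψd : HasFDerivAt ψ ((ContinuousLinearEquiv.refl ℝ X : X ≃L[ℝ] X) : X →L[ℝ] X) 0 := by
    have h1 : HasFDerivAt ψ (P + A.comp dg) 0 :=
      P.hasFDerivAt.add ((A.hasFDerivAt).comp 0 hgd)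
    convert h1 using 1
    ext x
    simpa using (hid x).symm
  have hψs : HasStrictFDerivAt ψ
      ((ContinuousLinearEquiv.refl ℝ X : X ≃L[ℝ] X) : X →L[ℝ] X) 0 :=
    hψcd.hasStrictFDerivAt' hψd one_ne_zero
  set φ : X → X := hψcd.localInverse hψd one_ne_zero with hφ
  have hφeq : φ = hψs.localInverse ψ _ 0 := rfl
  have hφ0 : φ 0 = 0 := by
    have := hψcd.localInverse_apply_image hψd one_ne_zero
    rwa [hψ0] at this
  have hφcd : ContDiffAt ℝ 1 φ 0 := by
    have := hψcd.to_localInverse hψd one_ne_zero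
    rwa [hψ0] at this
  have hφd : HasStrictFDerivAt φ
      ((ContinuousLinearEquiv.refl ℝ X : X ≃L[ℝ] X) : X →L[ℝ] X) 0 := by
    have := hψs.to_localInverse
    rw [hψ0] at this
    simpa [hφeq] using this
  have hRI : ∀ᶠ y in 𝓝 (0 : X), ψ (φ y) = y := by
    have := hψs.eventually_right_inverse
    rwa [hψ0] at this
  -- a neighborhood on which φ is C¹
  obtain ⟨W₀, hW₀, hφW₀⟩ := hφcd.contDiffOn le_rfl (by simp)
  set W : Set X := interior W₀ with hWdef
  have hWopen : IsOpen W := isOpen_interior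
  have hW0 : (0 : X) ∈ W := mem_interior_iff_mem_nhds.2 hW₀
  have hφW : ContDiffOn ℝ 1 φ W := hφW₀.mono interior_subset
  -- the map Φ
  set Φ : X → X := fun x => x - P x + φ (P x) with hΦ
  have hΦ0 : Φ 0 = 0 := by simp [hΦ, hP0, hφ0]
  have hΦd : HasFDerivAt Φ (ContinuousLinearMap.id ℝ X) 0 := by
    have hφd0 : HasFDerivAt φ
        ((ContinuousLinearEquiv.refl ℝ X : X ≃L[ℝ] X) : X →L[ℝ] X) (P 0) := by
      rw [hP0]; exact hφd.hasFDerivAt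
    have h1 : HasFDerivAt (fun x => φ (P x))
        (((ContinuousLinearEquiv.refl ℝ X : X ≃L[ℝ] X) : X →L[ℝ] X).comp P) 0 :=
      hφd0.comp 0 P.hasFDerivAt
    have h2 : HasFDerivAt Φ
        ((ContinuousLinearMap.id ℝ X - P) +
          ((ContinuousLinearEquiv.refl ℝ X : X ≃L[ℝ] X) : X →L[ℝ] X).comp P) 0 :=
      ((hasFDerivAt_id (0:X)).sub P.hasFDerivAt).add h1
    convert h2 using 1
    ext x; simp
  have hΦcd : ContDiffAt ℝ 1 Φ 0 := by
    apply ContDiffAt.add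
    · exact (contDiff_id.sub P.contDiff).contDiffAt
    · exact ContDiffAt.comp 0 (by rwa [hP0]) P.contDiff.contDiffAt
  have hΦs : HasStrictFDerivAt Φ
      ((ContinuousLinearEquiv.refl ℝ X : X ≃L[ℝ] X) : X →L[ℝ] X) 0 := by
    apply hΦcd.hasStrictFDerivAt' _ one_ne_zero
    simpa using hΦd
  set ΦPH := hΦs.toOpenPartialHomeomorph Φ with hΦPH
  -- the neighborhood V
  have hE : ∀ᶠ x in 𝓝 (0:X), ψ (φ (P x)) = P x ∧ φ (P x) ∈ U ∧ P x ∈ W := by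
    have hPt : Filter.Tendsto P (𝓝 0) (𝓝 0) := by
      simpa [hP0] using P.continuous.tendsto 0
    have hφPt : Filter.Tendsto (fun x => φ (P x)) (𝓝 0) (𝓝 0) := by
      have : Filter.Tendsto φ (𝓝 0) (𝓝 0) := by
        simpa [hφ0] using hφcd.continuousAt.tendsto
      exact this.comp hPt
    exact (hPt.eventually hRI).and ((hφPt.eventually (hU.eventually_mem h0U)).and
      (hPt.eventually (hWopen.eventually_mem hW0)))
  set S : Set X := {x | ψ (φ (P x)) = P x ∧ φ (P x) ∈ U ∧ P x ∈ W} with hS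
  set V : Set X := interior S ∩ ΦPH.source with hV
  have hVsub : ∀ x ∈ V, ψ (φ (P x)) = P x ∧ φ (P x) ∈ U ∧ P x ∈ W := by
    intro x hx
    have h1 : x ∈ interior S := hx.1
    have h2 : x ∈ S := interior_subset h1
    exact h2
  refine ⟨Φ, V, ?_, ?_, hΦ0, hΦd, ?_, ?_, ?_, ?_⟩
  · exact isOpen_interior.inter ΦPH.open_source
  · exact ⟨mem_interior_iff_mem_nhds.2 hE, hΦs.mem_toOpenPartialHomeomorph_source⟩
  · -- ContDiffOn
    apply ContDiffOn.add
    · exact (contDiff_id.sub P.contDiff).contDiffOn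
    · exact hφW.comp P.contDiff.contDiffOn (fun x hx => (hVsub x hx).2.2)
  · -- InjOn
    have : Set.InjOn Φ ΦPH.source := by
      have := ΦPH.injOn
      rwa [show (ΦPH : X → X) = Φ from rfl] at this
    exact this.mono (Set.inter_subset_right)
  · -- kernel condition
    rintro x ⟨hxK, hxV⟩
    have hxK' : x ∈ K := hxK
    have hPx : P x = x := hPK x hxK'
    obtain ⟨h1, h2, -⟩ := hVsub x hxV
    rw [hPx] at h1 h2
    have hΦx : Φ x = φ x := by simp [hΦ, hPx]
    -- ψ (φ x) = x means P (φ x) + A (g (φ x)) = x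
    have h3 : P (φ x) + A (g (φ x)) = x := h1
    have h4 : A (g (φ x)) ∈ K ⊓ C := by
      constructor
      · have : A (g (φ x)) = x - P (φ x) := by
          rw [eq_sub_iff_add_eq, add_comm]; exact h3
        rw [this]
        exact K.sub_mem hxK' (hP_mem _)
      · exact hA_mem _
    rw [hKC.1.eq_bot] at h4
    have h5 : g (φ x) = 0 := by
      have := hdgA (g (φ x))
      rw [show A (g (φ x)) = 0 from h4] at this
      simpa using this.symm
    have : φ x ∈ N ∩ U := by
      rw [hNU]; exact ⟨h2, h5⟩
    rw [hΦx]; exact this.1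
  · -- Δ condition
    rintro x ⟨hxΔ, hxV⟩
    obtain ⟨h1, -, -⟩ := hVsub x hxV
    have h3 : P (φ (P x)) + A (g (φ (P x))) = P x := h1
    have hdiff : φ (P x) - P x ∈ C := by
      have : φ (P x) - P x = (φ (P x) - P (φ (P x))) - A (g (φ (P x))) := by
        rw [sub_sub, h3]
      rw [this]
      exact C.sub_mem (hPC _) (hA_mem _)
    have : Φ x = x + (φ (P x) - P x) := by
      show x - P x + φ (P x) = x + (φ (P x) - P x)
      abel
    rw [this]
    exact Δ.add_mem hxΔ (hCΔ hdiff)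
end
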